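/- Let M be a boolean R×C matrix and let G_M be its grid embedding. Then for every 1 ≤ k ≤ R and 1 ≤ j ≤ C, the shortest-path distance between a_j and b_k in G_M equals 2R·(C−j+1) + 2jk − 1 if M_{k,j} = 1, and equals 2R·(C−j+1) + 2jk if M_{k,j} = 0. -/

import Mathlib

/-- Vertices of the grid embedding: `a j` (top terminals), `b i` (right terminals),
`u i j` (grid intersections), `v i j` (subdivision vertex above `u i j`),
`w i j` (subdivision vertex to the right of `u i j`), `x i j` (shortcut vertices).
Indices are 1-based natural numbers; out-of-range vertices are isolated. -/
inductive GV : Type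
  | a (j : ℕ)
  | b (i : ℕ)
  | u (i j : ℕ)
  | v (i j : ℕ)
  | w (i j : ℕ)
  | x (i j : ℕ)
deriving DecidableEq

/-- One-directional edge weights of the grid embedding of a boolean `R × C` matrix `M`;
`⊤` means "no edge". -/
def dirW (R C : ℕ) (M : ℕ → ℕ → Bool) : GV → GV → ℕ∞
  | GV.a j, GV.v i' j' =>
      if i' = 1 ∧ j' = j ∧ 1 ≤ j ∧ j ≤ C then ((2 * j - 1 : ℕ) : ℕ∞) else ⊤
  | GV.v i j, GV.u i' j' =>
      if i' = i ∧ j' = j ∧ 1 ≤ i ∧ i ≤ R ∧ 1 ≤ j ∧ j ≤ C then 1 else ⊤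
  | GV.u i j, GV.v i' j' =>
      if i' = i + 1 ∧ j' = j ∧ 1 ≤ i ∧ i + 1 ≤ R ∧ 1 ≤ j ∧ j ≤ C then
        ((2 * j - 1 : ℕ) : ℕ∞) else ⊤
  | GV.u i j, GV.w i' j' =>
      if i' = i ∧ j' = j ∧ 1 ≤ i ∧ i ≤ R ∧ 1 ≤ j ∧ j ≤ C then 2 else ⊤
  | GV.w i j, GV.u i' j' =>
      if i' = i ∧ j' = j + 1 ∧ 1 ≤ i ∧ i ≤ R ∧ 1 ≤ j ∧ j + 1 ≤ C then
        ((2 * R - 2 : ℕ) : ℕ∞) else ⊤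
  | GV.w i j, GV.b i' =>
      if i' = i ∧ j = C ∧ 1 ≤ i ∧ i ≤ R ∧ 1 ≤ C then ((2 * R - 2 : ℕ) : ℕ∞) else ⊤
  | GV.v i j, GV.x i' j' =>
      if i' = i ∧ j' = j ∧ M i j = true ∧ 1 ≤ i ∧ i ≤ R ∧ 1 ≤ j ∧ j ≤ C then 1 else ⊤
  | GV.x i j, GV.w i' j' =>
      if i' = i ∧ j' = j ∧ M i j = true ∧ 1 ≤ i ∧ i ≤ R ∧ 1 ≤ j ∧ j ≤ C then 1 else ⊤
  | _, _ => ⊤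

/-- Symmetrization of a one-directional weight function. -/
noncomputable def symW {V : Type} (f : V → V → ℕ∞) : V → V → ℕ∞ := fun p q => min (f p q) (f q p)

/-- Edge weights of the grid embedding of a boolean matrix `M`. -/
noncomputable def gridW (R C : ℕ) (M : ℕ → ℕ → Bool) : GV → GV → ℕ∞ := symW (dirW R C M)

/-- One-directional edge weights of the weighted grid embedding of an `R × C` matrix `M`
with entries in `{0, …, X}`: the grid embedding of the all-ones boolean matrix with every
weight multiplied by `X²`, and the weight of each edge `(v i j, x i j)` increased by `M i j`. -/
def dirWt (R C X : ℕ) (M : ℕ → ℕ → ℕ) : GV → GV → ℕ∞ := fun p q =>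
  (X : ℕ∞) ^ 2 * dirW R C (fun _ _ => true) p q +
    (match p, q with
      | GV.v i j, GV.x i' j' => if i' = i ∧ j' = j then (M i j : ℕ∞) else 0
      | _, _ => 0)

/-- Edge weights of the weighted grid embedding of `M`. -/
noncomputable def wgridW (R C X : ℕ) (M : ℕ → ℕ → ℕ) : GV → GV → ℕ∞ := symW (dirWt R C X M)

/-- Edge weights of the mirrored grid `G'`: the (weighted, scaled by `X²`) grid embedding
with all shortcut vertices removed.  Mirroring is a weight-preserving graph isomorphism, so
the mirrored copy is represented by the same abstract graph. -/
noncomputable def mirW (R C X : ℕ) : GV → GV → ℕ∞ :=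
  fun p q => (X : ℕ∞) ^ 2 * gridW R C (fun _ _ => false) p q

/-- Total weight of a walk, given as its list of visited vertices. -/
def cost {V : Type} (W : V → V → ℕ∞) : List V → ℕ∞
  | p :: q :: l => W p q + cost W (q :: l)
  | _ => 0

/-- Shortest-path distance: the least total weight of a walk from `s` to `t`
(`⊤` if there is none; walks through a non-edge have cost `⊤`). -/
noncomputable def gdist {V : Type} (W : V → V → ℕ∞) (s t : V) : ℕ∞ :=
  sInf {c | ∃ l : List V, l.head? = some s ∧ l.getLast? = some t ∧ cost W l = c}


namespace GridDistAux

/-- Effective-shortcut indicator used in the potential function. -/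
def sh (k : ℕ) (m : Bool) (i : ℕ) : ℕ := if i = k ∧ m = false then 0 else 1

lemma sh_le (k : ℕ) (m : Bool) (i : ℕ) : sh k m i ≤ 1 := by
  unfold sh; split <;> omega

lemma sh_eq_one {M : ℕ → ℕ → Bool} {k j i : ℕ} (h : M i j = true) :
    sh k (M k j) i = 1 := by
  unfold sh
  rw [if_neg]
  rintro ⟨rfl, hf⟩
  rw [h] at hf
  cases hf

/-- Potential function: a Lipschitz lower bound for the distance from `a j`. -/
def Dp (R C j k : ℕ) (m : Bool) : GV → ℕ
  | GV.a c => if c < j then 2*R*(j-c) + 2*j - 2*c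
              else if c = j then 0 else 2*j + 2*R*(c-j) + 2*c - 1
  | GV.b i => 2*j*i + 2*R*(C-j+1) - sh k m i
  | GV.u i c => if c < j then 2*R*(j-c) + 2*j + 2*c*(i-1)
                else if c = j then 2*j*i else 2*j*i + 2*R*(c-j) - sh k m i
  | GV.v i c => if c < j then 2*R*(j-c) + 2*j + 2*c*(i-1) - 1
                else if c = j then 2*j*i - 1 else 2*j*i + 2*R*(c-j)
  | GV.w i c => if c < j then 2*R*(j-c) + 2*j + 2*c*(i-1) - 2
                else if c = j then 2*j*i + 2 - sh k m i
                else 2*j*i + 2*R*(c-j) + 2 - sh k m i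
  | GV.x i c => if c < j then 2*R*(j-c) + 2*j + 2*c*(i-1) - 1
                else if c = j then 2*j*i else 2*j*i + 2*R*(c-j) + 1

lemma dir_lip (R C : ℕ) (M : ℕ → ℕ → Bool) (k j : ℕ)
    (hk1 : 1 ≤ k) (hkR : k ≤ R) (hj1 : 1 ≤ j) (hjC : j ≤ C) (p q : GV) :
    ((Dp R C j k (M k j) q : ℕ∞) ≤ Dp R C j k (M k j) p + dirW R C M p q) ∧
    ((Dp R C j k (M k j) p : ℕ∞) ≤ Dp R C j k (M k j) q + dirW R C M p q) := by
  cases p <;> cases q <;> try (refine ⟨?_, ?_⟩ <;> (simp [dirW]; done))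
  -- a, v
  · rename_i c i' c'
    simp only [dirW]
    split_ifs with h
    · obtain ⟨rfl, rfl, hc1, hcC⟩ := h
      constructor <;>
      · norm_cast
        simp only [Dp, Nat.sub_self, Nat.mul_zero, Nat.mul_one]
        split_ifs <;> omega
    · exact ⟨by simp, by simp⟩
  -- u, v : survivors i (row of u), c' (column)
  · rename_i i c i' c'
    simp only [dirW]
    split_ifs with h
    · obtain ⟨rfl, rfl, hi1, hiR, hc1, hcC⟩ := h
      obtain ⟨i₀, rfl⟩ : ∃ t, i = t + 1 := ⟨i - 1, by omega⟩
      have hr1 : 2*c'*(i₀+1) = 2*c'*i₀ + 2*c' := by ring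
      have hr2 : 2*j*(i₀+1) = 2*j*i₀ + 2*j := by ring
      have hr3 : 2*j*(i₀+1+1) = 2*j*(i₀+1) + 2*j := by ring
      have hs1 := sh_le k (M k j) (i₀+1)
      constructor <;>
      · norm_cast
        simp only [Dp, Nat.add_sub_cancel]
        split_ifs <;> omega
    · exact ⟨by simp, by simp⟩
  -- u, w : survivors i', c'
  · rename_i i c i' c'
    simp only [dirW]
    split_ifs with h
    · obtain ⟨rfl, rfl, hi1, hiR, hc1, hcC⟩ := h
      obtain ⟨i₀, rfl⟩ : ∃ t, i' = t + 1 := ⟨i' - 1, by omega⟩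
      have hr2 : 2*j*(i₀+1) = 2*j*i₀ + 2*j := by ring
      have hs1 := sh_le k (M k j) (i₀+1)
      constructor <;>
      · norm_cast
        simp only [Dp, Nat.add_sub_cancel]
        split_ifs <;> omega
    · exact ⟨by simp, by simp⟩
  -- v, u : survivors i', c'
  · rename_i i c i' c'
    simp only [dirW]
    split_ifs with h
    · obtain ⟨rfl, rfl, hi1, hiR, hc1, hcC⟩ := h
      obtain ⟨i₀, rfl⟩ : ∃ t, i' = t + 1 := ⟨i' - 1, by omega⟩
      have hr2 : 2*j*(i₀+1) = 2*j*i₀ + 2*j := by ring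
      have hs1 := sh_le k (M k j) (i₀+1)
      constructor <;>
      · norm_cast
        simp only [Dp, Nat.add_sub_cancel]
        split_ifs <;> omega
    · exact ⟨by simp, by simp⟩
  -- v, x : survivors i', c'
  · rename_i i c i' c'
    simp only [dirW]
    split_ifs with h
    · obtain ⟨rfl, rfl, hM, hi1, hiR, hc1, hcC⟩ := h
      obtain ⟨i₀, rfl⟩ : ∃ t, i' = t + 1 := ⟨i' - 1, by omega⟩
      have hr2 : 2*j*(i₀+1) = 2*j*i₀ + 2*j := by ring
      constructor <;>
      · norm_cast
        simp only [Dp, Nat.add_sub_cancel]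
        split_ifs <;> omega
    · exact ⟨by simp, by simp⟩
  -- w, b : survivors i', c (C is substituted by c)
  · rename_i i c i'
    simp only [dirW]
    split_ifs with h
    · obtain ⟨rfl, rfl, hi1, hiR, hC1⟩ := h
      obtain ⟨i₀, rfl⟩ : ∃ t, i' = t + 1 := ⟨i' - 1, by omega⟩
      have hb : 2*R*(c-j+1) = 2*R*(c-j) + 2*R := by ring
      have hb2 : c = j → 2*R*(c-j) = 0 := by
        intro h'; rw [show c-j = 0 from by omega]; ring
      have hr2 : 2*j*(i₀+1) = 2*j*i₀ + 2*j := by ring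
      have hs1 := sh_le k (M k j) (i₀+1)
      constructor <;>
      · norm_cast
        simp only [Dp, Nat.add_sub_cancel]
        split_ifs <;> omega
    · exact ⟨by simp, by simp⟩
  -- w, u : survivors i', c  (columns c and c+1)
  · rename_i i c i' c'
    simp only [dirW]
    split_ifs with h
    · obtain ⟨rfl, rfl, hi1, hiR, hc1, hcC⟩ := h
      obtain ⟨i₀, rfl⟩ : ∃ t, i' = t + 1 := ⟨i' - 1, by omega⟩
      have h1 : c+1 < j → 2*R*(j-c) = 2*R*(j-(c+1)) + 2*R := by
        intro h'; rw [show j - c = (j-(c+1))+1 from by omega]; ring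
      have h2 : c+1 = j → 2*R*(j-c) = 2*R := by
        intro h'; rw [show j - c = 1 from by omega]; ring
      have h3 : j < c → 2*R*((c+1)-j) = 2*R*(c-j) + 2*R := by
        intro h'; rw [show c+1-j = (c-j)+1 from by omega]; ring
      have h5 : c = j → 2*R*((c+1)-j) = 2*R := by
        intro h'; rw [show c+1-j = 1 from by omega]; ring
      have h6 : 2*(c+1)*i₀ = 2*c*i₀ + 2*i₀ := by ring
      have h7 : c+1 = j → 2*j*i₀ = 2*c*i₀ + 2*i₀ := by
        intro h'; rw [← h']; ring
      have hr2 : 2*j*(i₀+1) = 2*j*i₀ + 2*j := by ring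
      have hs1 := sh_le k (M k j) (i₀+1)
      constructor <;>
      · norm_cast
        simp only [Dp, Nat.add_sub_cancel]
        split_ifs <;> omega
    · exact ⟨by simp, by simp⟩
  -- x, w : survivors i', c'
  · rename_i i c i' c'
    simp only [dirW]
    split_ifs with h
    · obtain ⟨rfl, rfl, hM, hi1, hiR, hc1, hcC⟩ := h
      obtain ⟨i₀, rfl⟩ : ∃ t, i' = t + 1 := ⟨i' - 1, by omega⟩
      have hr2 : 2*j*(i₀+1) = 2*j*i₀ + 2*j := by ring
      have hs1 := sh_le k (M k j) (i₀+1)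
      have hsM : c' = j → sh k (M k j) (i₀+1) = 1 := by
        intro h'; exact sh_eq_one (h' ▸ hM)
      constructor <;>
      · norm_cast
        simp only [Dp, Nat.add_sub_cancel]
        split_ifs <;> omega
    · exact ⟨by simp, by simp⟩

lemma lip (R C : ℕ) (M : ℕ → ℕ → Bool) (k j : ℕ)
    (hk1 : 1 ≤ k) (hkR : k ≤ R) (hj1 : 1 ≤ j) (hjC : j ≤ C) (p q : GV) :
    (Dp R C j k (M k j) q : ℕ∞) ≤ Dp R C j k (M k j) p + gridW R C M p q := by
  have h := dir_lip R C M k j hk1 hkR hj1 hjC p q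
  have h' := dir_lip R C M k j hk1 hkR hj1 hjC q p
  unfold gridW symW
  rcases min_cases (dirW R C M p q) (dirW R C M q p) with ⟨he, _⟩ | ⟨he, _⟩ <;> rw [he]
  · exact h.1
  · exact h'.2

lemma cost_lower {V : Type} (W : V → V → ℕ∞) (D : V → ℕ)
    (hD : ∀ p q, (D q : ℕ∞) ≤ D p + W p q) :
    ∀ l : List V, ∀ s t, l.head? = some s → l.getLast? = some t →
      (D t : ℕ∞) ≤ D s + cost W l := by
  intro l
  induction l with
  | nil => intro s t hs _; simp at hs
  | cons p l ih =>
    intro s t hs ht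
    rw [List.head?_cons, Option.some_inj] at hs
    subst hs
    cases l with
    | nil =>
      simp only [List.getLast?_singleton, Option.some_inj] at ht
      subst ht
      simp [cost]
    | cons q l' =>
      rw [List.getLast?_cons_cons] at ht
      have h2 := ih q t rfl ht
      calc (D t : ℕ∞) ≤ (D q : ℕ∞) + cost W (q :: l') := h2
        _ ≤ ((D p : ℕ∞) + W p q) + cost W (q :: l') := by
            exact add_le_add_left (hD p q) _
        _ = (D p : ℕ∞) + cost W (p :: q :: l') := by
            rw [cost, add_assoc]

/-- Explicit shortest walk, horizontal part starting at `w k c` with `d = C - c`. -/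
def wlist (k : ℕ) : ℕ → ℕ → List GV
  | 0, c => [GV.w k c, GV.b k]
  | d+1, c => GV.w k c :: GV.u k (c+1) :: wlist k d (c+1)

/-- Explicit shortest walk, vertical part starting at `v i j` with `d = k - i`. -/
def vlist (m : Bool) (k j C : ℕ) : ℕ → ℕ → List GV
  | 0, i => GV.v i j :: (if m then GV.x i j else GV.u i j) :: wlist k (C-j) j
  | d+1, i => GV.v i j :: GV.u i j :: vlist m k j C d (i+1)

lemma wlist_head (k d c : ℕ) : (wlist k d c).head? = some (GV.w k c) := by
  cases d <;> rfl

lemma wlist_cons (k d c : ℕ) : ∃ l, wlist k d c = GV.w k c :: l := by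
  cases d <;> exact ⟨_, rfl⟩

lemma wlist_last (k : ℕ) : ∀ d c, (wlist k d c).getLast? = some (GV.b k) := by
  intro d
  induction d with
  | zero => intro c; rfl
  | succ d ih =>
    intro c
    obtain ⟨l, hl⟩ := wlist_cons k d (c+1)
    rw [wlist, List.getLast?_cons_cons, hl, List.getLast?_cons_cons, ← hl, ih]

lemma vlist_head (m : Bool) (k j C d i : ℕ) :
    (vlist m k j C d i).head? = some (GV.v i j) := by
  cases d <;> rfl

lemma vlist_last (m : Bool) (k j C : ℕ) : ∀ d i,
    (vlist m k j C d i).getLast? = some (GV.b k) := by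
  intro d
  induction d with
  | zero =>
    intro i
    obtain ⟨l, hl⟩ := wlist_cons k (C-j) j
    rw [vlist, List.getLast?_cons_cons, hl, List.getLast?_cons_cons, ← hl, wlist_last]
  | succ d ih =>
    intro i
    have hc : ∃ l, vlist m k j C d (i+1) = GV.v (i+1) j :: l := by
      cases d <;> exact ⟨_, rfl⟩
    obtain ⟨l, hl⟩ := hc
    rw [vlist, List.getLast?_cons_cons, hl, List.getLast?_cons_cons, ← hl, ih]

lemma cost_cons {V : Type} (W : V → V → ℕ∞) (p : V) {l : List V} {q : V}
    (h : l.head? = some q) : cost W (p :: l) = W p q + cost W l := by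
  cases l with
  | nil => simp at h
  | cons r l' =>
    rw [List.head?_cons, Option.some_inj] at h
    subst h
    rfl

lemma wlist_cost (R C : ℕ) (M : ℕ → ℕ → Bool) (k : ℕ) (hk1 : 1 ≤ k) (hkR : k ≤ R) :
    ∀ d c, 1 ≤ c → c + d = C →
      cost (gridW R C M) (wlist k d c) = ((2*R*(d+1) - 2 : ℕ) : ℕ∞) := by
  intro d
  induction d with
  | zero =>
    intro c hc1 hcC
    obtain rfl : C = c := by omega
    have h1 : gridW R C M (GV.w k C) (GV.b k) = ((2*R-2 : ℕ) : ℕ∞) := by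
      simp [gridW, symW, dirW, hk1, hkR, hc1]
    show gridW R C M (GV.w k C) (GV.b k) + cost (gridW R C M) [GV.b k] = _
    rw [h1]
    show _ + 0 = _
    norm_num
  | succ d ih =>
    intro c hc1 hcC
    have hw : gridW R C M (GV.w k c) (GV.u k (c+1)) = ((2*R-2 : ℕ) : ℕ∞) := by
      simp [gridW, symW, dirW, hk1, hkR, hc1, (by omega : c+1 ≤ C),
        (by omega : ¬ (c = c + 1))]
    have hu : gridW R C M (GV.u k (c+1)) (GV.w k (c+1)) = (2 : ℕ∞) := by
      simp [gridW, symW, dirW, hk1, hkR, (by omega : 1 ≤ c+1), (by omega : c+1 ≤ C),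
        (by omega : ¬ (c = c + 1)), (by omega : ¬ (c + 1 = c + 1 + 1))]
    rw [wlist, cost_cons _ _ (rfl : (GV.u k (c+1) :: wlist k d (c+1)).head? = some _),
      cost_cons _ _ (wlist_head k d (c+1)), ih (c+1) (by omega) (by omega), hw, hu]
    have h1 : 2*R*(d+1) = 2*R*d + 2*R := by ring
    have h2 : 2*R*(d+1+1) = 2*R*(d+1) + 2*R := by ring
    have hR : 1 ≤ R := le_trans hk1 hkR
    norm_cast
    omega

lemma vlist_cost (R C : ℕ) (M : ℕ → ℕ → Bool) (k j : ℕ)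
    (hk1 : 1 ≤ k) (hkR : k ≤ R) (hj1 : 1 ≤ j) (hjC : j ≤ C) :
    ∀ d i, 1 ≤ i → i + d = k →
      cost (gridW R C M) (vlist (M k j) k j C d i) =
        ((2*j*d + 2*R*(C-j+1) + (if M k j = true then 0 else 1) : ℕ) : ℕ∞) := by
  have hR : 1 ≤ R := le_trans hk1 hkR
  have hx : 2*R*(C-j+1) = 2*R*(C-j) + 2*R := by ring
  intro d
  induction d with
  | zero =>
    intro i hi1 hik
    obtain rfl : i = k := by omega
    have hwc := wlist_cost R C M i hi1 hkR (C-j) j hj1 (by omega)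
    cases hM : M i j with
    | true =>
      have h1 : gridW R C M (GV.v i j) (GV.x i j) = (1 : ℕ∞) := by
        simp [gridW, symW, dirW, hi1, hkR, hj1, hjC, hM]
      have h2 : gridW R C M (GV.x i j) (GV.w i j) = (1 : ℕ∞) := by
        simp [gridW, symW, dirW, hi1, hkR, hj1, hjC, hM]
      rw [vlist]
      simp only [↓reduceIte]
      rw [cost_cons _ _ (rfl : (GV.x i j :: wlist i (C-j) j).head? = some _),
        cost_cons _ _ (wlist_head i (C-j) j), h1, h2, hwc]
      norm_cast
      omega
    | false =>
      have h1 : gridW R C M (GV.v i j) (GV.u i j) = (1 : ℕ∞) := by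
        simp [gridW, symW, dirW, hi1, hkR, hj1, hjC, (by omega : ¬ (i = i + 1))]
      have h2 : gridW R C M (GV.u i j) (GV.w i j) = (2 : ℕ∞) := by
        simp [gridW, symW, dirW, hi1, hkR, hj1, hjC, (by omega : ¬ (j = j + 1))]
      rw [vlist]
      simp only [Bool.false_eq_true, ↓reduceIte]
      rw [cost_cons _ _ (rfl : (GV.u i j :: wlist i (C-j) j).head? = some _),
        cost_cons _ _ (wlist_head i (C-j) j), h1, h2, hwc]
      norm_cast
      omega
  | succ d ih =>
    intro i hi1 hik
    have h1 : gridW R C M (GV.v i j) (GV.u i j) = (1 : ℕ∞) := by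
      simp [gridW, symW, dirW, hi1, (by omega : i ≤ R), hj1, hjC, (by omega : ¬ (i = i + 1))]
    have h2 : gridW R C M (GV.u i j) (GV.v (i+1) j) = ((2*j-1 : ℕ) : ℕ∞) := by
      simp [gridW, symW, dirW, hi1, (by omega : i + 1 ≤ R), hj1, hjC,
        (by omega : ¬ (i = i + 1))]
    rw [vlist, cost_cons _ _ (rfl : (GV.u i j :: vlist (M k j) k j C d (i+1)).head? = some _),
      cost_cons _ _ (vlist_head (M k j) k j C d (i+1)), h1, h2,
      ih (i+1) (by omega) (by omega)]
    have h3 : 2*j*(d+1) = 2*j*d + 2*j := by ring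
    cases hM : M k j <;> simp only [hM, Bool.false_eq_true, ↓reduceIte] <;> norm_cast <;> omega

end GridDistAux

/-- Corollary 2.1.  In the grid embedding `G_M` of a boolean `R × C`
matrix `M`, for all `1 ≤ k ≤ R` and `1 ≤ j ≤ C`, the distance between `a j` and `b k` is
`2R·(C−j+1) + 2jk − 1` if `M k j = 1`, and `2R·(C−j+1) + 2jk` otherwise. -/
theorem grid_dist_a_b (R C : ℕ) (M : ℕ → ℕ → Bool) (k j : ℕ)
    (hk1 : 1 ≤ k) (hkR : k ≤ R) (hj1 : 1 ≤ j) (hjC : j ≤ C) :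
    gdist (gridW R C M) (GV.a j) (GV.b k) =
      (if M k j = true then ((2 * R * (C - j + 1) + 2 * j * k - 1 : ℕ) : ℕ∞)
       else ((2 * R * (C - j + 1) + 2 * j * k : ℕ) : ℕ∞)) := by
  classical
  obtain ⟨k₀, rfl⟩ : ∃ t, k = t + 1 := ⟨k - 1, by omega⟩
  have hR : 1 ≤ R := le_trans hk1 hkR
  set L : List GV := GV.a j :: GridDistAux.vlist (M (k₀+1) j) (k₀+1) j C k₀ 1 with hL
  have hhead : L.head? = some (GV.a j) := rfl
  have hlast : L.getLast? = some (GV.b (k₀+1)) := by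
    obtain ⟨l, hl⟩ : ∃ l, GridDistAux.vlist (M (k₀+1) j) (k₀+1) j C k₀ 1 = GV.v 1 j :: l := by
      cases k₀ <;> exact ⟨_, rfl⟩
    rw [hL, hl, List.getLast?_cons_cons, ← hl, GridDistAux.vlist_last]
  have hWa : gridW R C M (GV.a j) (GV.v 1 j) = ((2*j-1 : ℕ) : ℕ∞) := by
    simp [gridW, symW, dirW, hj1, hjC]
  have hcost : cost (gridW R C M) L =
      ((2*j-1 : ℕ) : ℕ∞) +
        ((2*j*k₀ + 2*R*(C-j+1) + (if M (k₀+1) j = true then 0 else 1) : ℕ) : ℕ∞) := by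
    rw [hL, GridDistAux.cost_cons _ _ (GridDistAux.vlist_head _ _ _ _ _ _), hWa,
      GridDistAux.vlist_cost R C M (k₀+1) j hk1 hkR hj1 hjC k₀ 1 le_rfl (by omega)]
  have hT : cost (gridW R C M) L =
      (if M (k₀+1) j = true then ((2 * R * (C - j + 1) + 2 * j * (k₀+1) - 1 : ℕ) : ℕ∞)
       else ((2 * R * (C - j + 1) + 2 * j * (k₀+1) : ℕ) : ℕ∞)) := by
    rw [hcost]
    have h3 : 2*j*(k₀+1) = 2*j*k₀ + 2*j := by ring
    have hx : 2*R*(C-j+1) = 2*R*(C-j) + 2*R := by ring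
    cases hM : M (k₀+1) j <;> simp only [hM, Bool.false_eq_true, ↓reduceIte] <;>
      norm_cast <;> omega
  apply le_antisymm
  · exact le_trans
      (show gdist (gridW R C M) (GV.a j) (GV.b (k₀+1)) ≤ cost (gridW R C M) L from
        sInf_le ⟨L, hhead, hlast, rfl⟩)
      (le_of_eq hT)
  · show _ ≤ sInf _
    apply le_sInf
    rintro x ⟨l, hs, ht, rfl⟩
    have h3 := GridDistAux.cost_lower (gridW R C M)
      (GridDistAux.Dp R C j (k₀+1) (M (k₀+1) j))
      (GridDistAux.lip R C M (k₀+1) j hk1 hkR hj1 hjC) l _ _ hs ht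
    have ha : GridDistAux.Dp R C j (k₀+1) (M (k₀+1) j) (GV.a j) = 0 := by
      simp [GridDistAux.Dp]
    rw [ha, Nat.cast_zero, zero_add] at h3
    refine le_trans (le_of_eq ?_) h3
    have hb : GridDistAux.Dp R C j (k₀+1) (M (k₀+1) j) (GV.b (k₀+1)) =
        (if M (k₀+1) j = true then 2 * R * (C - j + 1) + 2 * j * (k₀+1) - 1
         else 2 * R * (C - j + 1) + 2 * j * (k₀+1)) := by
      have hx : 2*R*(C-j+1) = 2*R*(C-j) + 2*R := by ring
      cases hM : M (k₀+1) j <;>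
        simp [GridDistAux.Dp, GridDistAux.sh, hM] <;> omega
    rw [hb]
    cases hM : M (k₀+1) j <;> simp only [hM, Bool.false_eq_true, ↓reduceIte]
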